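/- Let p be a prime, R = (ZMod p)^A for a finite set A (a commutative ring), and consider multivariate polynomials over R with all variable exponents at most p−1. If f is such a polynomial, d = max total degree of f, and m is a monomial of f with nonzero coefficient r ∈ R and total degree d > 0, then the monomial r·x₁⋯x_d lies in the R-polynomial linearly closed clonoid generated by f; if d = 0 then the constant r lies in it. -/

import Mathlib

/-- An `R`-polynomial linearly closed clonoid, for `R = (ZMod p)^A`: a nonempty set of
multivariate polynomials over `R` closed under `ZMod p`-linear combinations and under
substituting a `ZMod p`-linear combination of variables for a variable. -/
def IsRPolyLinClosedClonoid (p : ℕ) (A : Type*)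
    (C : Set (MvPolynomial ℕ (A → ZMod p))) : Prop :=
  C.Nonempty ∧
  (∀ (a b : ZMod p) (f g : MvPolynomial ℕ (A → ZMod p)),
    f ∈ C → g ∈ C → a • f + b • g ∈ C) ∧
  (∀ (f : MvPolynomial ℕ (A → ZMod p)) (l s : ℕ) (a : Fin s → ZMod p), f ∈ C →
    MvPolynomial.bind₁
      (fun j => if j = l then ∑ i : Fin s, a i • MvPolynomial.X (i : ℕ)
                else MvPolynomial.X j) f ∈ C)


namespace TopDeg
open MvPolynomial

variable {p : ℕ} {A : Type*} {C : Set (MvPolynomial ℕ (A → ZMod p))}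

lemma clo_smul (hC : IsRPolyLinClosedClonoid p A C) {f : MvPolynomial ℕ (A → ZMod p)}
    (hf : f ∈ C) (a : ZMod p) : a • f ∈ C := by
  simpa using hC.2.1 a 0 f f hf hf

lemma clo_zero (hC : IsRPolyLinClosedClonoid p A C) : (0 : MvPolynomial ℕ (A → ZMod p)) ∈ C := by
  obtain ⟨f, hf⟩ := hC.1
  simpa using clo_smul hC hf 0

lemma clo_add (hC : IsRPolyLinClosedClonoid p A C) {f g : MvPolynomial ℕ (A → ZMod p)}
    (hf : f ∈ C) (hg : g ∈ C) : f + g ∈ C := by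
  simpa using hC.2.1 1 1 f g hf hg

lemma clo_sum (hC : IsRPolyLinClosedClonoid p A C) {ι : Type*} {s : Finset ι}
    {g : ι → MvPolynomial ℕ (A → ZMod p)} (h : ∀ i ∈ s, g i ∈ C) :
    ∑ i ∈ s, g i ∈ C :=
  Finset.sum_induction g (· ∈ C) (fun _ _ ha hb => clo_add hC ha hb) (clo_zero hC) h

lemma clo_subst (hC : IsRPolyLinClosedClonoid p A C) {f : MvPolynomial ℕ (A → ZMod p)}
    (hf : f ∈ C) (l s : ℕ) (b : ℕ → ZMod p) :
    MvPolynomial.bind₁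
      (fun j => if j = l then ∑ i ∈ Finset.range s, b i • MvPolynomial.X i
                else MvPolynomial.X j) f ∈ C := by
  have h := hC.2.2 f l s (fun i => b i) hf
  rwa [Fin.sum_univ_eq_sum_range (fun i => b i • (MvPolynomial.X i : MvPolynomial ℕ (A → ZMod p))) s] at h

lemma clo_scale (hC : IsRPolyLinClosedClonoid p A C) {f : MvPolynomial ℕ (A → ZMod p)}
    (hf : f ∈ C) (l : ℕ) (a : ZMod p) :
    MvPolynomial.bind₁ (fun j => if j = l then a • X l else X j) f ∈ C := by
  have h := clo_subst hC hf l (l + 1) (fun i => if i = l then a else 0)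
  have key : (∑ i ∈ Finset.range (l + 1),
      (if i = l then a else (0 : ZMod p)) • (X i : MvPolynomial ℕ (A → ZMod p))) = a • X l := by
    simp [ite_smul, Finset.sum_ite_eq']
  rwa [key] at h

lemma clo_rename (hC : IsRPolyLinClosedClonoid p A C) {f : MvPolynomial ℕ (A → ZMod p)}
    (hf : f ∈ C) (l t : ℕ) :
    MvPolynomial.bind₁ (fun j => if j = l then X t else X j) f ∈ C := by
  have h := clo_subst hC hf l (t + 1) (fun i => if i = t then 1 else 0)
  have key : (∑ i ∈ Finset.range (t + 1),
      (if i = t then (1 : ZMod p) else 0) • (X i : MvPolynomial ℕ (A → ZMod p))) = X t := by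
    simp [ite_smul, Finset.sum_ite_eq']
  rwa [key] at h

lemma clo_splitvar (hC : IsRPolyLinClosedClonoid p A C) {f : MvPolynomial ℕ (A → ZMod p)}
    (hf : f ∈ C) {l t : ℕ} (hlt : l ≠ t) :
    MvPolynomial.bind₁ (fun j => if j = l then X l + X t else X j) f ∈ C := by
  have h := clo_subst hC hf l (max l t + 1)
    (fun i => (if i = l then (1:ZMod p) else 0) + (if i = t then 1 else 0))
  have key : (∑ i ∈ Finset.range (max l t + 1),
      ((if i = l then (1:ZMod p) else 0) + (if i = t then 1 else 0)) •
        (X i : MvPolynomial ℕ (A → ZMod p))) = X l + X t := by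
    simp only [add_smul, Finset.sum_add_distrib, ite_smul, zero_smul, one_smul,
      Finset.sum_ite_eq']
    have hl : l ∈ Finset.range (max l t + 1) := Finset.mem_range.2 (Nat.lt_succ_of_le (le_max_left l t))
    have ht : t ∈ Finset.range (max l t + 1) := Finset.mem_range.2 (Nat.lt_succ_of_le (le_max_right l t))
    simp [hl, ht]
  rwa [key] at h


lemma bind_scale_monomial (l : ℕ) (a : ZMod p) (μ : ℕ →₀ ℕ) (r : A → ZMod p) :
    MvPolynomial.bind₁ (fun j => if j = l then a • X l else X j) (monomial μ r)
      = a ^ (μ l) • monomial μ r := by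
  rw [show (MvPolynomial.bind₁ (R := A → ZMod p) (fun j => if j = l then a • X l else X j))
      = aeval (fun j => if j = l then a • X l else X j) from rfl, aeval_monomial]
  have step1 : (μ.prod fun i k => (if i = l then a • X l else X i) ^ k)
      = ∏ i ∈ μ.support, ((if i = l then (algebraMap (ZMod p) (MvPolynomial ℕ (A → ZMod p)) a) ^ (μ i) else 1) * X i ^ μ i) := by
    rw [Finsupp.prod]
    refine Finset.prod_congr rfl fun i _ => ?_
    by_cases h : i = l
    · subst h; simp [smul_pow, Algebra.smul_def, mul_pow]
    · simp [h]
  rw [step1, Finset.prod_mul_distrib, Finset.prod_ite_eq' μ.support l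
    (fun i => (algebraMap (ZMod p) (MvPolynomial ℕ (A → ZMod p)) a) ^ (μ i))]
  have hpow : (if l ∈ μ.support then (algebraMap (ZMod p) (MvPolynomial ℕ (A → ZMod p)) a) ^ (μ l) else 1)
      = (algebraMap (ZMod p) (MvPolynomial ℕ (A → ZMod p)) a) ^ (μ l) := by
    split
    · rfl
    · next h => simp [Finsupp.notMem_support_iff.mp h]
  rw [hpow, Algebra.smul_def, map_pow, monomial_eq, Finsupp.prod]
  rw [MvPolynomial.algebraMap_eq]
  ring

lemma vdm (hp : p.Prime) (k j : Fin p) :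
    ∑ i : Fin p, (Matrix.vandermonde (fun i : Fin p => ((i : ℕ) : ZMod p)))⁻¹ k i * ((i : ℕ) : ZMod p) ^ (j : ℕ)
      = if k = j then 1 else 0 := by
  haveI := Fact.mk hp
  set v : Fin p → ZMod p := fun i => ((i : ℕ) : ZMod p) with hv
  have hvinj : Function.Injective v := by
    intro i i' h
    have h2 := congrArg ZMod.val h
    rw [hv] at h2
    simp only [ZMod.val_natCast_of_lt i.isLt, ZMod.val_natCast_of_lt i'.isLt] at h2
    exact Fin.ext h2
  have hdet : IsUnit (Matrix.vandermonde v).det := by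
    rw [Matrix.det_vandermonde]
    rw [isUnit_iff_ne_zero]
    rw [Finset.prod_ne_zero_iff]
    intro i _
    rw [Finset.prod_ne_zero_iff]
    intro j' hj'
    have : i < j' := Finset.mem_Ioi.mp hj'
    exact sub_ne_zero.2 (fun h => absurd (hvinj h) (ne_of_gt this))
  have h := Matrix.nonsing_inv_mul _ hdet
  have h2 := congrFun (congrFun h k) j
  rw [Matrix.mul_apply] at h2
  simp only [Matrix.vandermonde_apply] at h2
  rw [h2, Matrix.one_apply]

noncomputable def Eop (p : ℕ) (A : Type*) (l : ℕ) (k : Fin p)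
    (f : MvPolynomial ℕ (A → ZMod p)) : MvPolynomial ℕ (A → ZMod p) :=
  ∑ i : Fin p, (Matrix.vandermonde (fun i : Fin p => ((i : ℕ) : ZMod p)))⁻¹ k i •
    MvPolynomial.bind₁ (fun j => if j = l then (((i : ℕ) : ZMod p)) • X l else X j) f

lemma Eop_monomial (hp : p.Prime) (l : ℕ) (k : Fin p) (μ : ℕ →₀ ℕ) (r : A → ZMod p)
    (hμ : μ l < p) :
    Eop p A l k (monomial μ r) = if (k : ℕ) = μ l then monomial μ r else 0 := by
  simp only [Eop, bind_scale_monomial, smul_smul, ← Finset.sum_smul]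
  have h2 : (∑ i : Fin p, (Matrix.vandermonde (fun i : Fin p => ((i : ℕ) : ZMod p)))⁻¹ k i *
      ((i : ℕ) : ZMod p) ^ (μ l)) = if k = ⟨μ l, hμ⟩ then 1 else 0 := vdm hp k ⟨μ l, hμ⟩
  rw [h2]
  by_cases hk : (k : ℕ) = μ l
  · have : k = ⟨μ l, hμ⟩ := Fin.ext hk
    simp [this, hk]
  · have : k ≠ ⟨μ l, hμ⟩ := fun h => hk (by simpa using congrArg Fin.val h)
    simp [this, hk]

lemma Eop_sum {ι : Type*} (s : Finset ι) (g : ι → MvPolynomial ℕ (A → ZMod p)) (l : ℕ) (k : Fin p) :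
    Eop p A l k (∑ j ∈ s, g j) = ∑ j ∈ s, Eop p A l k (g j) := by
  simp only [Eop, map_sum, Finset.smul_sum]
  exact Finset.sum_comm

lemma Eop_mem (hC : IsRPolyLinClosedClonoid p A C) {f : MvPolynomial ℕ (A → ZMod p)}
    (hf : f ∈ C) (l : ℕ) (k : Fin p) : Eop p A l k f ∈ C :=
  clo_sum hC (fun i _ => clo_smul hC (clo_scale hC hf l _) _)

lemma Eop_filter (hp : p.Prime) (f : MvPolynomial ℕ (A → ZMod p)) (l : ℕ) (k : Fin p)
    (hb : ∀ m ∈ f.support, m l < p) :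
    Eop p A l k f = ∑ μ ∈ f.support.filter (fun μ => μ l = (k : ℕ)), monomial μ (f.coeff μ) := by
  conv_lhs => rw [← support_sum_monomial_coeff f]
  rw [Eop_sum, Finset.sum_filter]
  refine Finset.sum_congr rfl fun μ hμ => ?_
  rw [Eop_monomial hp l k _ _ (hb μ hμ)]
  by_cases h : μ l = (k : ℕ)
  · simp [h]
  · rw [if_neg (fun hh : (k:ℕ) = μ l => h hh.symm), if_neg h]

lemma coeff_filtered (f : MvPolynomial ℕ (A → ZMod p)) (P : (ℕ →₀ ℕ) → Prop) [DecidablePred P]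
    (ν : ℕ →₀ ℕ) :
    coeff ν (∑ μ ∈ f.support.filter P, monomial μ (f.coeff μ)) = if P ν then f.coeff ν else 0 := by
  rw [coeff_sum]
  simp only [coeff_monomial, Finset.sum_ite_eq', Finset.mem_filter]
  by_cases h1 : ν ∈ f.support
  · by_cases h2 : P ν <;> simp [h1, h2]
  · by_cases h2 : P ν <;> simp [h1, h2, Finsupp.notMem_support_iff.mp h1, MvPolynomial.coeff]

lemma isolate (hp : p.Prime) (hC : IsRPolyLinClosedClonoid p A C) :
    ∀ (n : ℕ) (f : MvPolynomial ℕ (A → ZMod p)), f ∈ C → f.support.card ≤ n →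
      (∀ m' ∈ f.support, ∀ i, m' i < p) → ∀ m ∈ f.support, monomial m (f.coeff m) ∈ C := by
  intro n
  induction n with
  | zero =>
    intro f _ hcard _ m hm
    rw [Nat.le_zero, Finset.card_eq_zero] at hcard
    simp [hcard] at hm
  | succ n ih =>
    intro f hf hcard hb m hm
    by_cases hsub : f.support ⊆ {m}
    · have hsupp : f.support = {m} := by
        rcases Finset.subset_singleton_iff.mp hsub with h | h
        · simp [h] at hm
        · exact h
      have hfm : f = monomial m (f.coeff m) := by
        conv_lhs => rw [← support_sum_monomial_coeff f]
        rw [hsupp, Finset.sum_singleton]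
      rwa [← hfm]
    · obtain ⟨m', hm', hne⟩ : ∃ m' ∈ f.support, m' ≠ m := by
        by_contra h
        push_neg at h
        exact hsub fun x hx => Finset.mem_singleton.2 (h x hx)
      obtain ⟨l, hl⟩ : ∃ l, m' l ≠ m l := by
        by_contra h
        push_neg at h
        exact hne (Finsupp.ext h)
      have hk : m l < p := hb m hm l
      set g := Eop p A l ⟨m l, hk⟩ f with hgdef
      have hgC : g ∈ C := Eop_mem hC hf l ⟨m l, hk⟩
      have hgeq : g = ∑ μ ∈ f.support.filter (fun μ => μ l = m l), monomial μ (f.coeff μ) :=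
        Eop_filter hp f l ⟨m l, hk⟩ (fun μ hμ => hb μ hμ l)
      have hcoeff : ∀ ν, g.coeff ν = if ν l = m l then f.coeff ν else 0 := by
        intro ν
        rw [hgeq, coeff_filtered f (fun μ => μ l = m l) ν]
      have hsuppg : g.support ⊆ f.support.filter (fun μ => μ l = m l) := by
        intro ν hν
        rw [mem_support_iff, hcoeff] at hν
        by_cases h : ν l = m l
        · rw [if_pos h] at hν
          exact Finset.mem_filter.2 ⟨mem_support_iff.2 hν, h⟩
        · rw [if_neg h] at hν
          exact absurd rfl hν
      have hssub : f.support.filter (fun μ => μ l = m l) ⊂ f.support := by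
        refine (Finset.ssubset_iff_of_subset (Finset.filter_subset _ _)).2 ⟨m', hm', ?_⟩
        simp [hl]
      have hcard' : g.support.card ≤ n := by
        have h1 := Finset.card_le_card hsuppg
        have h2 := Finset.card_lt_card hssub
        omega
      have hgb : ∀ m'' ∈ g.support, ∀ i, m'' i < p := fun m'' h i =>
        hb m'' (Finset.filter_subset _ _ (hsuppg h)) i
      have hmg : m ∈ g.support := by
        rw [mem_support_iff, hcoeff, if_pos rfl]
        exact mem_support_iff.mp hm
      have hres := ih g hgC hcard' hgb m hmg
      rwa [show g.coeff m = f.coeff m from by rw [hcoeff, if_pos rfl]] at hres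


lemma bind_move_monomial (l t : ℕ) (μ : ℕ →₀ ℕ) (r : A → ZMod p) :
    MvPolynomial.bind₁ (fun j => if j = l then (X t : MvPolynomial ℕ (A → ZMod p)) else X j)
        (monomial μ r)
      = monomial (μ.erase l + Finsupp.single t (μ l)) r := by
  have hfun : MvPolynomial.bind₁ (fun j => if j = l then (X t : MvPolynomial ℕ (A → ZMod p)) else X j)
      = (rename (fun j => if j = l then t else j)) := by
    apply algHom_ext
    intro i
    rw [bind₁_X_right, rename_X, apply_ite X]
  rw [hfun, rename_monomial]
  congr 1
  conv_lhs => rw [← Finsupp.erase_add_single l μ]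
  rw [Finsupp.mapDomain_add, Finsupp.mapDomain_single, if_pos rfl]
  congr 1
  rw [Finsupp.mapDomain_congr (g := id), Finsupp.mapDomain_id]
  intro x hx
  rw [Finsupp.support_erase] at hx
  simp [Finset.ne_of_mem_erase hx]

lemma clo_move (hC : IsRPolyLinClosedClonoid p A C) {μ : ℕ →₀ ℕ} {r : A → ZMod p}
    (h : monomial μ r ∈ C) (l t : ℕ) :
    monomial (μ.erase l + Finsupp.single t (μ l)) r ∈ C := by
  have hmem := clo_rename hC h l t
  rwa [bind_move_monomial] at hmem

lemma prod_erase_eq_monomial (l : ℕ) (μ : ℕ →₀ ℕ) :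
    ∏ i ∈ μ.support.erase l, (X i : MvPolynomial ℕ (A → ZMod p)) ^ μ i
      = monomial (μ.erase l) (1 : A → ZMod p) := by
  rw [monomial_eq, map_one, one_mul, Finsupp.prod]
  rw [Finsupp.support_erase]
  refine Finset.prod_congr rfl fun i hi => ?_
  rw [Finsupp.erase_ne (Finset.ne_of_mem_erase hi)]

lemma bind_split_monomial (l t : ℕ) (μ : ℕ →₀ ℕ) (r : A → ZMod p)
    (hl : 0 < μ l) :
    MvPolynomial.bind₁ (fun j => if j = l then (X l + X t : MvPolynomial ℕ (A → ZMod p)) else X j)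
        (monomial μ r)
      = ∑ j ∈ Finset.range (μ l + 1),
          monomial (μ.erase l + Finsupp.single l j + Finsupp.single t (μ l - j))
            ((μ l).choose j • r) := by
  rw [show (MvPolynomial.bind₁ (R := A → ZMod p)
      (fun j => if j = l then (X l + X t : MvPolynomial ℕ (A → ZMod p)) else X j))
      = aeval (fun j => if j = l then (X l + X t : MvPolynomial ℕ (A → ZMod p)) else X j) from rfl,
    aeval_monomial]
  have hmem : l ∈ μ.support := Finsupp.mem_support_iff.2 hl.ne'
  rw [Finsupp.prod, ← Finset.mul_prod_erase _ _ hmem, if_pos rfl]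
  have hprod : ∏ i ∈ μ.support.erase l,
      (if i = l then (X l + X t : MvPolynomial ℕ (A → ZMod p)) else X i) ^ μ i
      = monomial (μ.erase l) (1 : A → ZMod p) := by
    rw [← prod_erase_eq_monomial l μ]
    refine Finset.prod_congr rfl fun i hi => ?_
    rw [if_neg (Finset.ne_of_mem_erase hi)]
  rw [hprod, add_pow, MvPolynomial.algebraMap_eq, Finset.sum_mul, Finset.mul_sum]
  refine Finset.sum_congr rfl fun j hj => ?_
  rw [X_pow_eq_monomial, X_pow_eq_monomial]
  rw [show ((μ l).choose j : MvPolynomial ℕ (A → ZMod p)) = C (((μ l).choose j : ℕ) • (1 : A → ZMod p)) by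
    rw [nsmul_eq_mul, mul_one]; exact (map_natCast MvPolynomial.C _).symm]
  rw [C_apply, C_apply]
  simp only [monomial_mul]
  congr 1
  · abel
  · rw [nsmul_eq_mul, nsmul_eq_mul]; ring


lemma clo_split_step (hp : p.Prime) (hC : IsRPolyLinClosedClonoid p A C)
    {μ : ℕ →₀ ℕ} {r : A → ZMod p} (h : monomial μ r ∈ C) {l t : ℕ} (hlt : l ≠ t)
    (h2 : 2 ≤ μ l) (hub : μ l < p) :
    monomial (μ.erase l + Finsupp.single l 1 + Finsupp.single t (μ l - 1)) r ∈ C := by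
  haveI := Fact.mk hp
  have hg := clo_splitvar hC h hlt
  rw [bind_split_monomial l t μ r (by omega)] at hg
  have h1p : 1 < p := hp.one_lt
  have hE := Eop_mem hC hg l ⟨1, h1p⟩
  rw [Eop_sum] at hE
  have hnu : ∀ j, (μ.erase l + Finsupp.single l j + Finsupp.single t (μ l - j)) l = j := by
    intro j
    simp [Finsupp.single_apply, Ne.symm hlt, Finsupp.erase_apply]
  have heval : ∀ j ∈ Finset.range (μ l + 1),
      Eop p A l ⟨1, h1p⟩
        (monomial (μ.erase l + Finsupp.single l j + Finsupp.single t (μ l - j))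
          ((μ l).choose j • r))
      = if 1 = j then monomial (μ.erase l + Finsupp.single l j + Finsupp.single t (μ l - j))
          ((μ l).choose j • r) else 0 := by
    intro j hj
    have hjp : (μ.erase l + Finsupp.single l j + Finsupp.single t (μ l - j)) l < p := by
      rw [hnu j]
      have := Finset.mem_range.mp hj
      omega
    rw [Eop_monomial hp l ⟨1, h1p⟩ _ _ hjp]
    rw [hnu j]
  rw [Finset.sum_congr rfl heval, Finset.sum_ite_eq (Finset.range (μ l + 1)) 1] at hE
  rw [if_pos (Finset.mem_range.mpr (by omega))] at hE
  have hsm := clo_smul hC hE ((μ l : ZMod p))⁻¹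
  rw [smul_monomial] at hsm
  have hk0 : ((μ l : ℕ) : ZMod p) ≠ 0 := by
    intro h0
    have hdvd := (ZMod.natCast_eq_zero_iff (μ l) p).mp h0
    have := Nat.le_of_dvd (by omega) hdvd
    omega
  have hcoe : (((μ l : ℕ) : ZMod p)⁻¹ • ((μ l).choose 1) • r) = r := by
    rw [Nat.choose_one_right, ← Nat.cast_smul_eq_nsmul (ZMod p) (μ l) r, smul_smul,
      inv_mul_cancel₀ hk0, one_smul]
  rwa [hcoe] at hsm


lemma to_multilinear (hp : p.Prime) (hC : IsRPolyLinClosedClonoid p A C) :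
    ∀ (N : ℕ) (μ : ℕ →₀ ℕ) (r : A → ZMod p), (∀ i, μ i < p) → monomial μ r ∈ C →
      (μ.sum fun _ e => e - 1) ≤ N →
      ∃ ν : ℕ →₀ ℕ, (∀ i, ν i ≤ 1) ∧ (ν.sum fun _ e => e) = (μ.sum fun _ e => e) ∧
        monomial ν r ∈ C := by
  intro N
  induction N with
  | zero =>
    intro μ r hb h hN
    refine ⟨μ, ?_, rfl, h⟩
    intro i
    by_cases hi : i ∈ μ.support
    · have h0 : (μ.sum fun _ e => e - 1) = 0 := Nat.le_zero.mp hN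
      rw [Finsupp.sum] at h0
      have := Finset.sum_eq_zero_iff.mp h0 i hi
      omega
    · simp [Finsupp.notMem_support_iff.mp hi]
  | succ N ih =>
    intro μ r hb h hN
    by_cases hml : ∀ i, μ i ≤ 1
    · exact ⟨μ, hml, rfl, h⟩
    push_neg at hml
    obtain ⟨l, hl⟩ := hml
    set t := (μ.support.sup id) + 1 with hT
    have hts : t ∉ μ.support := by
      intro hmem
      have := Finset.le_sup (f := id) hmem
      simp only [id] at this
      omega
    have hlmem : l ∈ μ.support := Finsupp.mem_support_iff.2 (by omega)
    have hlt : l ≠ t := fun h' => hts (h' ▸ hlmem)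
    have hμt : μ t = 0 := Finsupp.notMem_support_iff.mp hts
    have hstep := clo_split_step hp hC h hlt (by omega) (hb l)
    set ν := μ.erase l + Finsupp.single l 1 + Finsupp.single t (μ l - 1) with hν
    have hνap : ∀ i, ν i = if i = l then 1 else if i = t then μ l - 1 else μ i := by
      intro i
      by_cases h1 : i = l
      · subst h1
        simp [hν, Finsupp.single_apply, Ne.symm hlt]
      · by_cases h2 : i = t
        · subst h2
          simp [hν, Finsupp.single_apply, h1, Ne.symm h1, hμt, hlt]
        · simp [hν, Finsupp.single_apply, h1, h2, Ne.symm h1, Ne.symm h2]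
    set S := μ.support ∪ {t} with hS
    have hμS : μ.support ⊆ S := Finset.subset_union_left
    have hνS : ν.support ⊆ S := by
      intro i hi
      rw [Finsupp.mem_support_iff, hνap i] at hi
      by_cases h1 : i = l
      · exact Finset.mem_union_left _ (h1 ▸ hlmem)
      · by_cases h2 : i = t
        · exact h2 ▸ Finset.mem_union_right _ (Finset.mem_singleton_self t)
        · rw [if_neg h1, if_neg h2] at hi
          exact Finset.mem_union_left _ (Finsupp.mem_support_iff.2 hi)
    have hlS : l ∈ S := hμS hlmem
    have htS : t ∈ S := Finset.mem_union_right _ (Finset.mem_singleton_self t)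
    have hdecomp : ∀ (w : ℕ → ℕ), ∑ i ∈ S, w i = w l + w t + ∑ i ∈ (S.erase l).erase t, w i := by
      intro w
      have e1 := Finset.sum_erase_add S w hlS
      have e2 := Finset.sum_erase_add (S.erase l) w (Finset.mem_erase.2 ⟨Ne.symm hlt, htS⟩)
      omega
    have hkey : ∀ (g : ℕ → ℕ),
        (∑ i ∈ S, g (ν i)) + g (μ l) + g 0 = (∑ i ∈ S, g (μ i)) + g 1 + g (μ l - 1) := by
      intro g
      rw [hdecomp (fun i => g (ν i)), hdecomp (fun i => g (μ i))]
      have hcg : ∀ i ∈ (S.erase l).erase t, g (ν i) = g (μ i) := by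
        intro i hi
        have h2 : i ≠ t := Finset.ne_of_mem_erase hi
        have h1 : i ≠ l := Finset.ne_of_mem_erase (Finset.mem_of_mem_erase hi)
        rw [hνap i, if_neg h1, if_neg h2]
      rw [Finset.sum_congr rfl hcg, hνap l, if_pos rfl, hνap t, if_neg (Ne.symm hlt), if_pos rfl,
        hμt]
      omega
    have hsumν : (ν.sum fun _ e => e) = ∑ i ∈ S, ν i :=
      Finsupp.sum_of_support_subset ν hνS _ (fun _ _ => rfl)
    have hsumμ : (μ.sum fun _ e => e) = ∑ i ∈ S, μ i :=
      Finsupp.sum_of_support_subset μ hμS _ (fun _ _ => rfl)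
    have hsumν' : (ν.sum fun _ e => e - 1) = ∑ i ∈ S, (ν i - 1) :=
      Finsupp.sum_of_support_subset ν hνS _ (fun _ _ => rfl)
    have hsumμ' : (μ.sum fun _ e => e - 1) = ∑ i ∈ S, (μ i - 1) :=
      Finsupp.sum_of_support_subset μ hμS _ (fun _ _ => rfl)
    have keyid := hkey (fun e => e)
    have keysub := hkey (fun e => e - 1)
    have hb' : ∀ i, ν i < p := by
      intro i
      rw [hνap i]
      have h1 := hb l
      have h2 := hp.one_lt
      split
      · omega
      · split
        · omega
        · exact hb i
    obtain ⟨ν', hν'1, hν'2, hν'3⟩ := ih ν r hb' hstep (by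
      rw [hsumν']
      rw [hsumμ'] at hN
      omega)
    refine ⟨ν', hν'1, ?_, hν'3⟩
    rw [hν'2, hsumν, hsumμ]
    omega


lemma msf_apply (S : Finset ℕ) (j : ℕ) :
    (∑ i ∈ S, Finsupp.single i (1 : ℕ)) j = if j ∈ S then 1 else 0 := by
  rw [Finset.sum_apply']
  simp [Finsupp.single_apply, Finset.sum_ite_eq']

lemma renameDown (hC : IsRPolyLinClosedClonoid p A C) (r : A → ZMod p) :
    ∀ (M : ℕ) (S : Finset ℕ), (∑ i ∈ S, i) ≤ M →
      monomial (∑ i ∈ S, Finsupp.single i (1 : ℕ)) r ∈ C →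
      monomial (∑ i ∈ Finset.range S.card, Finsupp.single i (1 : ℕ)) r ∈ C := by
  intro M
  induction M with
  | zero =>
    intro S hsum h
    by_cases hS : S = Finset.range S.card
    · rwa [← hS]
    · exfalso
      have hcard : (Finset.range S.card).card = S.card := Finset.card_range _
      have hns : ¬ S ⊆ Finset.range S.card := fun hsub =>
        hS (Finset.eq_of_subset_of_card_le hsub (le_of_eq hcard))
      obtain ⟨l, hlS, hlnot⟩ := Finset.not_subset.mp hns
      have hlge : S.card ≤ l := by simpa using hlnot
      have hlsum : l ≤ ∑ i ∈ S, i := Finset.single_le_sum (f := fun i => i) (fun _ _ => Nat.zero_le _) hlS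
      have hpos : S.card ≠ 0 := Finset.card_ne_zero_of_mem hlS
      omega
  | succ M ih =>
    intro S hsum h
    by_cases hS : S = Finset.range S.card
    · rwa [← hS]
    · have hcard : (Finset.range S.card).card = S.card := Finset.card_range _
      have hns : ¬ S ⊆ Finset.range S.card := fun hsub =>
        hS (Finset.eq_of_subset_of_card_le hsub (le_of_eq hcard))
      obtain ⟨l, hlS, hlnot⟩ := Finset.not_subset.mp hns
      have hlge : S.card ≤ l := by simpa using hlnot
      have hnr : ¬ Finset.range S.card ⊆ S := fun hsub =>
        hS (Finset.eq_of_subset_of_card_le hsub (le_of_eq hcard.symm)).symm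
      obtain ⟨t, htr, htnot⟩ := Finset.not_subset.mp hnr
      have htlt : t < S.card := Finset.mem_range.mp htr
      have htl : t ≠ l := by omega
      have hmove := clo_move hC h l t
      have hid : (∑ i ∈ S, Finsupp.single i (1 : ℕ)).erase l +
          Finsupp.single t ((∑ i ∈ S, Finsupp.single i (1 : ℕ)) l)
          = ∑ i ∈ insert t (S.erase l), Finsupp.single i (1 : ℕ) := by
        ext j
        rw [Finsupp.add_apply, Finsupp.erase_apply, Finsupp.single_apply, msf_apply,
          msf_apply, msf_apply]
        by_cases h1 : j = l
        · subst h1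
          simp [htl, Ne.symm htl, hlS, Finset.notMem_erase]
        · by_cases h2 : j = t
          · subst h2
            simp [h1, htnot, hlS]
          · simp only [if_neg h1, if_neg (fun hh => h2 (Eq.symm hh)), Finset.mem_insert,
              if_neg h2, add_zero]
            by_cases h3 : j ∈ S
            · simp [h3, Finset.mem_erase, h1, h2]
            · simp [h3, Finset.mem_erase, h2]
      rw [hid] at hmove
      have htne : t ∉ S.erase l := fun hmem => htnot (Finset.mem_of_mem_erase hmem)
      have hcard' : (insert t (S.erase l)).card = S.card := by
        rw [Finset.card_insert_of_notMem htne, Finset.card_erase_of_mem hlS]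
        have : S.card ≠ 0 := Finset.card_ne_zero_of_mem hlS
        omega
      have hsum' : (∑ i ∈ insert t (S.erase l), i) ≤ M := by
        rw [Finset.sum_insert htne]
        have e1 := Finset.sum_erase_add S (fun i => i) hlS
        have hlsum : l ≤ ∑ i ∈ S, i := Finset.single_le_sum (f := fun i => i) (fun _ _ => Nat.zero_le _) hlS
        omega
      have := ih (insert t (S.erase l)) hsum' hmove
      rwa [hcard'] at this

end TopDeg

theorem top_degree_monomial_in_clonoid (p : ℕ) (hp : p.Prime) (A : Type*) [Fintype A]
    (f : MvPolynomial ℕ (A → ZMod p))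
    (hexp : ∀ m ∈ f.support, ∀ i, m i ≤ p - 1)
    (m : ℕ →₀ ℕ) (hm : m ∈ f.support)
    (hdeg : (m.sum fun _ e => e) = f.totalDegree) :
    ∀ C, IsRPolyLinClosedClonoid p A C → f ∈ C →
      (f.totalDegree = 0 → MvPolynomial.C (f.coeff m) ∈ C) ∧
      (0 < f.totalDegree →
        MvPolynomial.monomial (∑ i ∈ Finset.range f.totalDegree, Finsupp.single i 1)
          (f.coeff m) ∈ C) := by
  intro C hC hf
  have hppos : 0 < p := hp.pos
  have hb : ∀ m' ∈ f.support, ∀ i, m' i < p := by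
    intro m' h i
    have := hexp m' h i
    omega
  have hiso := TopDeg.isolate hp hC f.support.card f hf le_rfl hb m hm
  constructor
  · intro h0
    have hm0 : m = 0 := by
      rw [h0] at hdeg
      rw [Finsupp.sum] at hdeg
      ext i
      by_cases hi : i ∈ m.support
      · simpa using Finset.sum_eq_zero_iff.mp hdeg i hi
      · simpa using Finsupp.notMem_support_iff.mp hi
    subst hm0
    rwa [show (MvPolynomial.monomial (0 : ℕ →₀ ℕ)) (f.coeff 0) = MvPolynomial.C (f.coeff 0) from
      congrFun MvPolynomial.monomial_zero' _] at hiso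
  · intro hpos
    obtain ⟨ν, hν1, hν2, hν3⟩ := TopDeg.to_multilinear hp hC (m.sum fun _ e => e - 1) m
      (f.coeff m) (fun i => hb m hm i) hiso le_rfl
    have hνmsf : ν = ∑ i ∈ ν.support, Finsupp.single i 1 := by
      ext j
      rw [TopDeg.msf_apply]
      by_cases hj : j ∈ ν.support
      · have h1 := Finsupp.mem_support_iff.mp hj
        have h2 := hν1 j
        rw [if_pos hj]
        omega
      · rw [if_neg hj]
        exact Finsupp.notMem_support_iff.mp hj
    have hcard : ν.support.card = f.totalDegree := by
      have hc : (ν.sum fun _ e => e) = ν.support.card := by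
        rw [Finsupp.sum, Finset.card_eq_sum_ones]
        refine Finset.sum_congr rfl fun i hi => ?_
        have h1 := hν1 i
        have h2 := Finsupp.mem_support_iff.mp hi
        omega
      rw [← hc, hν2, hdeg]
    have hren := TopDeg.renameDown hC (f.coeff m) (∑ i ∈ ν.support, i) ν.support le_rfl
      (hνmsf ▸ hν3)
    rwa [hcard] at hren
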